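/- For the simple symmetric random walk with edge local times U_{n,r}, for every integers n ≥ 1 and u ≥ 0, Σ_{r=1}^∞ P[U_{n-1,r} = u and R_n = r] = 2^(-n) · C(n-1, ⌊(n+u)/2⌋), and moreover this quantity is at most 1/√n. -/

import Mathlib

open MeasureTheory ProbabilityTheory

namespace SW


def stp (b : Bool) : ℤ := if b then 1 else -1

lemma stp_true : stp true = 1 := rfl
lemma stp_false : stp false = -1 := rfl

def pos (l : List Bool) : ℤ := (l.map stp).sum

@[simp] lemma pos_nil : pos [] = 0 := rfl
@[simp] lemma pos_cons (c : Bool) (l : List Bool) : pos (c :: l) = stp c + pos l := by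
  simp [pos]

@[simp] lemma pos_append (l₁ l₂ : List Bool) : pos (l₁ ++ l₂) = pos l₁ + pos l₂ := by
  simp [pos]

@[simp] lemma pos_reverse (l : List Bool) : pos l.reverse = pos l := by
  simp [pos, List.map_reverse]

@[simp] lemma pos_map_not (l : List Bool) : pos (l.map not) = -pos l := by
  induction l with
  | nil => simp
  | cons c l ih => cases c <;> simp [ih, stp] <;> ring

def edges : List Bool → List ℤ
  | [] => []
  | c :: w => max 0 (stp c) :: (edges w).map (· + stp c)

@[simp] lemma edges_nil : edges [] = [] := rfl
@[simp] lemma edges_cons (c : Bool) (w : List Bool) :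
    edges (c :: w) = max 0 (stp c) :: (edges w).map (· + stp c) := rfl

@[simp] lemma length_edges (l : List Bool) : (edges l).length = l.length := by
  induction l with
  | nil => rfl
  | cons c w ih => simp [ih]

lemma edges_concat (l : List Bool) (c : Bool) :
    edges (l ++ [c]) = edges l ++ [pos l + max 0 (stp c)] := by
  induction l with
  | nil => simp
  | cons a t ih =>
      simp only [List.cons_append, edges_cons, ih, List.map_append, List.map_cons,
        List.map_nil, pos_cons]
      congr 3
      ring

lemma edges_reverse (l : List Bool) :
    edges l.reverse = ((edges l).reverse).map (fun x => pos l + 1 - x) := by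
  induction l with
  | nil => simp
  | cons a t ih =>
      have h2 : max 0 (stp a) + max 0 (stp a) = stp a + 1 := by cases a <;> simp [stp]
      simp only [List.reverse_cons, edges_concat, ih, edges_cons, List.reverse_cons,
        List.map_append, List.map_map, List.map_cons, pos_reverse, pos_cons]
      congr 1
      · rw [List.map_reverse, List.map_reverse, List.map_map]
        congr 1
        apply List.map_congr_left
        intro x _
        simp only [Function.comp_apply]
        ring
      · congr 1
        omega

lemma edges_map_not (l : List Bool) :
    edges (l.map not) = (edges l).map (fun x => 1 - x) := by
  induction l with
  | nil => simp
  | cons a t ih =>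
      have h1 : max 0 (stp !a) = 1 - max 0 (stp a) := by cases a <;> simp [stp]
      simp only [List.map_cons, edges_cons, ih, List.map_map, h1]
      congr 1
      apply List.map_congr_left
      intro x _
      simp [Function.comp, stp]
      cases a <;> simp [stp] <;> ring

lemma edges_le (l : List Bool) : ∀ x ∈ edges l, x ≤ (l.length : ℤ) := by
  induction l with
  | nil => simp
  | cons a t ih =>
      intro x hx
      simp only [edges_cons, List.mem_cons, List.mem_map] at hx
      rcases hx with h | ⟨y, hy, rfl⟩
      · subst h
        cases a <;> simp [stp] <;> omega
      · have := ih y hy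
        have : stp a ≤ 1 := by cases a <;> simp [stp]
        simp only [List.length_cons]
        push_cast
        have := ih y hy
        have ha : stp a ≤ 1 := by cases a <;> simp [stp]
        omega

lemma edges_getElem (l : List Bool) (i : ℕ) (h : i < l.length) :
    (edges l)[i]'(by simpa using h) = max (pos (l.take i)) (pos (l.take (i + 1))) := by
  induction l generalizing i with
  | nil => simp at h
  | cons a t ih =>
      cases i with
      | zero => simp [pos]
      | succ j =>
          have hj : j < t.length := by simpa using h
          have := ih j hj
          simp only [edges_cons, List.getElem_cons_succ, List.getElem_map, this,
            List.take_succ_cons, pos_cons]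
          omega




lemma count_map_add (E : List ℤ) (s h : ℤ) :
    (E.map (· + s)).count h = E.count (h - s) := by
  have hinj : Function.Injective (fun x : ℤ => x + s) := fun a b hab => by
    dsimp at hab; omega
  have h2 := List.count_map_of_injective E (fun x : ℤ => x + s) hinj (h - s)
  simp only [sub_add_cancel] at h2
  exact h2

lemma count_map_onesub (E : List ℤ) (h : ℤ) :
    (E.map (fun x => 1 - x)).count h = E.count (1 - h) := by
  have hinj : Function.Injective (fun x : ℤ => 1 - x) := fun a b hab => by
    dsimp at hab; omega
  have h2 := List.count_map_of_injective E (fun x : ℤ => 1 - x) hinj (1 - h)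
  simp only [sub_sub_cancel] at h2
  exact h2

lemma count_edges_cons (c : Bool) (w : List Bool) (h : ℤ) :
    (edges (c :: w)).count h =
      (if max 0 (stp c) = h then 1 else 0) + (edges w).count (h - stp c) := by
  rw [edges_cons, List.count_cons, count_map_add]
  simp only [beq_iff_eq]
  omega

def cnt (m u : ℕ) (h : ℤ) : ℕ :=
  ∑ v : Fin m → Bool, if (edges (List.ofFn v)).count h = u then 1 else 0

lemma ofFn_cons (m : ℕ) (b : Bool) (w : Fin m → Bool) :
    List.ofFn (Fin.cons b w) = b :: List.ofFn w := by
  rw [List.ofFn_succ]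
  congr 1

lemma cnt_succ (m u : ℕ) (h : ℤ) :
    cnt (m + 1) u h =
      (if (1:ℤ) = h then (if u = 0 then 0 else cnt m (u - 1) (h - 1)) else cnt m u (h - 1)) +
      (if (0:ℤ) = h then (if u = 0 then 0 else cnt m (u - 1) (h + 1)) else cnt m u (h + 1)) := by
  unfold cnt
  rw [← Equiv.sum_comp (Fin.consEquiv (fun _ : Fin (m+1) => Bool))
    (fun v => if (edges (List.ofFn v)).count h = u then 1 else 0)]
  rw [Fintype.sum_prod_type, Fintype.sum_bool]
  have key : ∀ (b : Bool) (w : Fin m → Bool),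
      (Fin.consEquiv (fun _ : Fin (m+1) => Bool)) (b, w) = Fin.cons b w := fun _ _ => rfl
  simp only [key, ofFn_cons, count_edges_cons]
  have e1 : (max 0 (stp true) : ℤ) = 1 := rfl
  have e0 : (max 0 (stp false) : ℤ) = 0 := rfl
  have es1 : stp true = 1 := rfl
  have es0 : stp false = -1 := rfl
  rw [e1, e0, es1, es0]
  congr 1
  · by_cases hc : (1:ℤ) = h
    · rw [if_pos hc, if_pos hc]
      by_cases hu : u = 0
      · subst hu; rw [if_pos rfl]
        apply Finset.sum_eq_zero; intro w _
        rw [if_neg]; omega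
      · rw [if_neg hu]
        apply Finset.sum_congr rfl; intro w _
        exact if_congr (by omega) rfl rfl
    · rw [if_neg hc, if_neg hc]
      apply Finset.sum_congr rfl; intro w _
      exact if_congr (by omega) rfl rfl
  · simp only [show h - -1 = h + 1 from by ring]
    by_cases hc : (0:ℤ) = h
    · rw [if_pos hc, if_pos hc]
      by_cases hu : u = 0
      · subst hu; rw [if_pos rfl]
        apply Finset.sum_eq_zero; intro w _
        rw [if_neg]; omega
      · rw [if_neg hu]
        apply Finset.sum_congr rfl; intro w _
        exact if_congr (by omega) rfl rfl
    · rw [if_neg hc, if_neg hc]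
      apply Finset.sum_congr rfl; intro w _
      exact if_congr (by omega) rfl rfl

lemma cnt_symm (m u : ℕ) (h : ℤ) : cnt m u h = cnt m u (1 - h) := by
  have hinv : Function.Involutive (fun v : Fin m → Bool => fun i => !(v i)) := by
    intro v; funext i; simp
  unfold cnt
  refine (Fintype.sum_bijective _ hinv.bijective _ _ fun v => ?_).symm
  have h1 : List.ofFn (fun i => !(v i)) = (List.ofFn v).map not := by
    rw [List.map_ofFn]; rfl
  simp only [h1, edges_map_not, count_map_onesub, sub_sub_cancel]


lemma cnt_zero_len (u : ℕ) (h : ℤ) : cnt 0 u h = if u = 0 then 1 else 0 := by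
  unfold cnt
  have huniv : (Finset.univ : Finset (Fin 0 → Bool)) = {fun i => i.elim0} :=
    Finset.eq_singleton_iff_unique_mem.2
      ⟨Finset.mem_univ _, fun w _ => funext fun i => i.elim0⟩
  rw [huniv, Finset.sum_singleton]
  simp [eq_comm]




def Msum (m h : ℕ) : ℕ := ∑ i ∈ Finset.Icc 1 h, Nat.choose m ((m + i) / 2)

lemma choose_congr {m a b : ℕ} (hab : a = b) : m.choose a = m.choose b := by rw [hab]

lemma choose_half (m : ℕ) : m.choose (m / 2) = m.choose ((m + 1) / 2) := by
  rcases Nat.even_or_odd m with ⟨k, hk⟩ | ⟨k, hk⟩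
  · rw [choose_congr (show m / 2 = (m + 1) / 2 by omega)]
  · have h1 : m = 2 * k + 1 := by omega
    subst h1
    rw [choose_congr (show (2 * k + 1) / 2 = k by omega),
      choose_congr (show (2 * k + 1 + 1) / 2 = k + 1 by omega), Nat.choose_symm_half]

lemma pascal' (m j : ℕ) (hj : 1 ≤ j) :
    (m + 1).choose j = m.choose (j - 1) + m.choose j := by
  obtain ⟨i, rfl⟩ : ∃ i, j = i + 1 := ⟨j - 1, by omega⟩
  simp [Nat.choose_succ_succ]

@[simp] lemma Msum_zero (m : ℕ) : Msum m 0 = 0 := by simp [Msum]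

lemma Msum_succ (m h : ℕ) : Msum m (h + 1) = Msum m h + m.choose ((m + h + 1) / 2) := by
  unfold Msum
  rw [Finset.sum_Icc_succ_top (by omega)]
  rw [choose_congr (show (m + (h + 1)) / 2 = (m + h + 1) / 2 by omega)]

lemma Msum_one (m : ℕ) : Msum m 1 = m.choose ((m + 1) / 2) := by
  have := Msum_succ m 0
  simpa using this

lemma Msum_two (m : ℕ) : Msum m 2 = m.choose ((m + 1) / 2) + m.choose ((m + 2) / 2) := by
  have h := Msum_succ m 1
  rw [Msum_one] at h
  rw [h, choose_congr (show (m + 1 + 1) / 2 = (m + 2) / 2 by omega)]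

lemma Msum_rec (m h : ℕ) (hh : 1 ≤ h) :
    Msum (m + 1) h = Msum m (h - 1) + Msum m (h + 1) := by
  induction h with
  | zero => omega
  | succ g ih =>
      rcases Nat.eq_zero_or_pos g with h1 | h1
      · subst h1
        rw [Msum_one, Msum_two, show (0:ℕ) + 1 - 1 = 0 from rfl, Msum_zero, zero_add]
        rw [pascal' m ((m + 1 + 1) / 2) (by omega)]
        rw [choose_congr (show (m + 1 + 1) / 2 - 1 = m / 2 by omega), choose_half,
          choose_congr (show (m + 1 + 1) / 2 = (m + 2) / 2 by omega)]
      · have ihg := ih h1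
        rw [Msum_succ (m + 1) g, ihg]
        rw [pascal' m ((m + 1 + g + 1) / 2) (by omega)]
        rw [choose_congr (show (m + 1 + g + 1) / 2 - 1 = (m + g) / 2 by omega)]
        have e2 : Msum m g = Msum m (g - 1) + m.choose ((m + g) / 2) := by
          have h3 := Msum_succ m (g - 1)
          rw [choose_congr (show (m + (g - 1) + 1) / 2 = (m + g) / 2 by omega),
            show g - 1 + 1 = g by omega] at h3
          exact h3
        have e5 : Msum m (g + 1 + 1) = Msum m (g + 1) + m.choose ((m + 1 + g + 1) / 2) := by
          have h3 := Msum_succ m (g + 1)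
          rw [choose_congr (show (m + (g + 1) + 1) / 2 = (m + 1 + g + 1) / 2 by omega)] at h3
          exact h3
        rw [show g + 1 - 1 = g from rfl, e2, e5,
          choose_congr (show (m + 1 + g + 1) / 2 = (m + g + 1 + 1) / 2 by omega)]
        rw [choose_congr (show (m + g + 1 + 1) / 2 = (m + 1 + g + 1) / 2 by omega)]
        omega

lemma cnt_main : ∀ m : ℕ,
    (∀ h : ℕ, 1 ≤ h → cnt m 0 (h : ℤ) = Msum m h) ∧
    (∀ u h : ℕ, 1 ≤ u → 1 ≤ h → cnt m u (h : ℤ) = m.choose ((m + u + h) / 2)) := by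
  intro m
  induction m with
  | zero =>
      have hM : ∀ g : ℕ, Msum 0 (g + 1) = 1 := by
        intro g
        induction g with
        | zero => rw [Msum_one]; rfl
        | succ t iht =>
            rw [Msum_succ, iht]
            obtain ⟨j, hj⟩ : ∃ j, (0 + (t + 1) + 1) / 2 = j + 1 := ⟨(0 + (t + 1) + 1) / 2 - 1, by omega⟩
            rw [choose_congr hj, Nat.choose_zero_succ]
      constructor
      · intro h hh
        rw [cnt_zero_len, if_pos rfl]
        obtain ⟨g, rfl⟩ : ∃ g, h = g + 1 := ⟨h - 1, by omega⟩
        rw [hM g]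
      · intro u h hu hh
        rw [cnt_zero_len, if_neg (by omega)]
        obtain ⟨j, hj⟩ : ∃ j, (0 + u + h) / 2 = j + 1 := ⟨(0 + u + h) / 2 - 1, by omega⟩
        rw [choose_congr hj, Nat.choose_zero_succ]
  | succ m ih =>
      obtain ⟨ih0, ihP⟩ := ih
      have ihP1 : ∀ u : ℕ, cnt m u (1 : ℤ) = m.choose ((m + u + 1) / 2) := by
        intro u
        rcases Nat.eq_zero_or_pos u with h1 | h1
        · subst h1
          have := ih0 1 le_rfl
          rw [Nat.cast_one] at this
          rw [this, Msum_one, choose_congr (show (m + 1) / 2 = (m + 0 + 1) / 2 by omega)]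
        · have := ihP u 1 h1 le_rfl
          rw [Nat.cast_one] at this
          exact this
      constructor
      · intro h hh
        rw [cnt_succ]
        rcases Nat.eq_or_lt_of_le hh with h1 | h1
        · have : h = 1 := by omega
          subst this
          rw [Nat.cast_one, if_pos rfl, if_pos rfl, if_neg (by norm_num)]
          rw [show (1:ℤ) + 1 = ((2:ℕ):ℤ) from by norm_num]
          rw [ih0 2 (by omega), Msum_rec m 1 le_rfl]
          simp
        · have c1 : ¬ ((1:ℤ) = (h:ℤ)) := by omega
          have c0 : ¬ ((0:ℤ) = (h:ℤ)) := by omega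
          rw [if_neg c1, if_neg c0]
          rw [show (h:ℤ) - 1 = ((h - 1 : ℕ) : ℤ) from by omega,
            show (h:ℤ) + 1 = ((h + 1 : ℕ) : ℤ) from by omega]
          rw [ih0 (h - 1) (by omega), ih0 (h + 1) (by omega), Msum_rec m h hh]
      · intro u h hu hh
        rw [cnt_succ]
        rcases Nat.eq_or_lt_of_le hh with h1 | h1
        · have : h = 1 := by omega
          subst this
          rw [Nat.cast_one, if_pos rfl, if_neg (show ¬ ((0:ℤ) = 1) by norm_num)]
          rw [if_neg (show ¬ u = 0 by omega)]
          rw [show (1:ℤ) - 1 = (0:ℤ) from by norm_num, cnt_symm m (u - 1) 0,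
            show (1:ℤ) - 0 = (1:ℤ) from by norm_num, ihP1 (u - 1)]
          rw [show (1:ℤ) + 1 = ((2:ℕ):ℤ) from by norm_num, ihP u 2 hu (by omega)]
          rw [choose_congr (show (m + (u - 1) + 1) / 2 = (m + u + 2) / 2 - 1 by omega)]
          rw [← pascal' m ((m + u + 2) / 2) (by omega)]
          rw [choose_congr (show (m + u + 2) / 2 = (m + 1 + u + 1) / 2 by omega)]
        · have c1 : ¬ ((1:ℤ) = (h:ℤ)) := by omega
          have c0 : ¬ ((0:ℤ) = (h:ℤ)) := by omega
          rw [if_neg c1, if_neg c0]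
          rw [show (h:ℤ) - 1 = ((h - 1 : ℕ) : ℤ) from by omega,
            show (h:ℤ) + 1 = ((h + 1 : ℕ) : ℤ) from by omega]
          rw [ihP u (h - 1) hu (by omega), ihP u (h + 1) hu (by omega)]
          rw [choose_congr (show (m + u + (h - 1)) / 2 = (m + u + h + 1) / 2 - 1 by omega)]
          rw [choose_congr (show (m + u + (h + 1)) / 2 = (m + u + h + 1) / 2 by omega)]
          rw [← pascal' m ((m + u + h + 1) / 2) (by omega)]
          rw [choose_congr (show (m + u + h + 1) / 2 = (m + 1 + u + h) / 2 by omega)]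

lemma cnt_formula (m u : ℕ) : cnt m u 0 = m.choose ((m + u + 1) / 2) := by
  rw [cnt_symm m u 0, show (1:ℤ) - 0 = (1:ℤ) from by norm_num]
  rcases Nat.eq_zero_or_pos u with h1 | h1
  · subst h1
    have := (cnt_main m).1 1 le_rfl
    rw [Nat.cast_one] at this
    rw [this, Msum_one, choose_congr (show (m + 1) / 2 = (m + 0 + 1) / 2 by omega)]
  · have := (cnt_main m).2 u 1 h1 le_rfl
    rw [Nat.cast_one] at this
    exact this



lemma central_sq : ∀ k : ℕ, (2*k+1) * (Nat.centralBinom k)^2 ≤ 4^(2*k+1) := by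
  intro k
  induction k with
  | zero => simp [Nat.centralBinom]
  | succ k ih =>
      have key := Nat.succ_mul_centralBinom_succ k
      have hpos : 0 < (k+1)^2 := by positivity
      apply Nat.le_of_mul_le_mul_left _ hpos
      calc (k+1)^2 * ((2*(k+1)+1) * (Nat.centralBinom (k+1))^2)
          = (2*k+3) * ((k+1) * Nat.centralBinom (k+1))^2 := by ring
        _ = (2*k+3) * (2*(2*k+1) * Nat.centralBinom k)^2 := by rw [key]
        _ = ((2*k+3)*(2*k+1)*4) * ((2*k+1) * (Nat.centralBinom k)^2) := by ring
        _ ≤ ((2*k+3)*(2*k+1)*4) * 4^(2*k+1) := Nat.mul_le_mul_left _ ih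
        _ ≤ ((k+1)^2*16) * 4^(2*k+1) := Nat.mul_le_mul_right _ (by nlinarith)
        _ = (k+1)^2 * 4^(2*(k+1)+1) := by ring

lemma n_mul_sq_le (n : ℕ) (hn : 1 ≤ n) :
    n * ((n-1).choose ((n-1)/2))^2 ≤ 4^n := by
  rcases Nat.even_or_odd n with ⟨k, hk⟩ | ⟨k, hk⟩
  · -- n = 2k, k ≥ 1
    have hk1 : 1 ≤ k := by omega
    have hn2 : n = 2*k := by omega
    subst hn2
    have e1 : 2*k - 1 = 2*(k-1) + 1 := by omega
    have e2 : (2*k - 1)/2 = k - 1 := by omega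
    have hd : Nat.centralBinom k = 2 * ((2*k-1).choose ((2*k-1)/2)) := by
      rw [Nat.centralBinom, e2]
      have p : (2*k).choose k = (2*k-1).choose (k-1) + (2*k-1).choose k := by
        rw [show 2*k = (2*k-1) + 1 by omega, show k = (k-1) + 1 by omega]
        rw [Nat.choose_succ_succ]
        congr 2 <;> omega
      have s : (2*k-1).choose k = (2*k-1).choose (k-1) := by
        rw [e1, show k = (k-1) + 1 by omega]
        exact Nat.choose_symm_half (k-1)
      omega
    have A := central_sq k
    apply Nat.le_of_mul_le_mul_left _ (show 0 < 4 by norm_num)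
    calc 4 * (2*k * ((2*k-1).choose ((2*k-1)/2))^2)
        = 2*k * (2 * ((2*k-1).choose ((2*k-1)/2)))^2 := by ring
      _ = 2*k * (Nat.centralBinom k)^2 := by rw [hd]
      _ ≤ (2*k+1) * (Nat.centralBinom k)^2 := Nat.mul_le_mul_right _ (by omega)
      _ ≤ 4^(2*k+1) := A
      _ = 4 * 4^(2*k) := by ring
  · have hn2 : n = 2*k + 1 := by omega
    subst hn2
    have e2 : (2*k + 1 - 1)/2 = k := by omega
    rw [e2, show 2*k+1-1 = 2*k by omega]
    exact central_sq k

lemma choose_sqrt_bound (n u : ℕ) (hn : 1 ≤ n) :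
    ((n-1).choose ((n+u)/2) : ENNReal) / 2^n ≤ ENNReal.ofReal (1 / Real.sqrt n) := by
  set C := (n-1).choose ((n+u)/2) with hCdef
  have hC : C ≤ (n-1).choose ((n-1)/2) := Nat.choose_le_middle _ _
  have h1 : (n:ℝ) * (C:ℝ)^2 ≤ ((2:ℝ)^n)^2 := by
    have h2 : n * C^2 ≤ 4^n := by
      calc n * C^2 ≤ n * ((n-1).choose ((n-1)/2))^2 := by
            apply Nat.mul_le_mul_left
            exact Nat.pow_le_pow_left hC 2
        _ ≤ 4^n := n_mul_sq_le n hn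
    have := (Nat.cast_le (α := ℝ)).2 h2
    push_cast at this
    calc (n:ℝ) * (C:ℝ)^2 ≤ (4:ℝ)^n := this
      _ = ((2:ℝ)^n)^2 := by
          rw [← pow_mul, mul_comm n 2, pow_mul]
          norm_num
  have hsq : Real.sqrt n * C ≤ 2^n := by
    have hnn : (0:ℝ) ≤ Real.sqrt n * C := by positivity
    have h2 : (Real.sqrt n * (C:ℝ))^2 ≤ ((2:ℝ)^n)^2 := by
      rw [mul_pow, Real.sq_sqrt (by positivity : (0:ℝ) ≤ (n:ℝ))]
      exact h1
    exact (pow_le_pow_iff_left₀ hnn (by positivity) (by norm_num)).1 h2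
  have hs0 : (0:ℝ) < Real.sqrt n := Real.sqrt_pos.2 (by exact_mod_cast hn)
  have hreal : (C:ℝ) / 2^n ≤ 1 / Real.sqrt n := by
    rw [div_le_div_iff₀ (by positivity) hs0]
    nlinarith [hsq]
  calc (C : ENNReal) / 2^n = ENNReal.ofReal ((C:ℝ) / 2^n) := by
        rw [ENNReal.ofReal_div_of_pos (by positivity)]
        congr 1
        · exact (ENNReal.ofReal_natCast C).symm
        · rw [ENNReal.ofReal_pow (by norm_num)]
          norm_num
    _ ≤ ENNReal.ofReal (1 / Real.sqrt n) := ENNReal.ofReal_le_ofReal hreal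



def lastEdge (l : List Bool) : ℤ := (edges l).getD (l.length - 1) 0
def prevCount (l : List Bool) : ℕ := ((edges l).dropLast).count (lastEdge l)

lemma lastEdge_rev (b : Bool) (w : List Bool) :
    lastEdge ((b :: w).reverse) = pos (b :: w) + 1 - max 0 (stp b) := by
  unfold lastEdge
  rw [edges_reverse (b :: w)]
  have hlt : w.length <
      (((edges (b :: w)).reverse).map (fun x => pos (b :: w) + 1 - x)).length := by simp
  have hidx : ((b :: w).reverse).length - 1 = w.length := by simp
  rw [hidx, List.getD_eq_getElem?_getD, List.getElem?_eq_getElem hlt, Option.getD_some,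
    List.getElem_map, List.getElem_reverse]
  simp

lemma count_map_sub (E : List ℤ) (c h : ℤ) :
    (E.map (fun x => c - x)).count h = E.count (c - h) := by
  have hinj : Function.Injective (fun x : ℤ => c - x) := fun a b hab => by dsimp at hab; omega
  have h2 := List.count_map_of_injective E (fun x : ℤ => c - x) hinj (c - h)
  simp only [sub_sub_cancel] at h2
  exact h2

lemma prevCount_rev (b : Bool) (w : List Bool) :
    prevCount ((b :: w).reverse) = (edges w).count (max 0 (stp b) - stp b) := by
  unfold prevCount
  rw [lastEdge_rev, edges_reverse (b :: w), ← List.map_dropLast]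
  have hdrop : ((edges (b :: w)).reverse).dropLast = ((edges (b :: w)).tail).reverse := by
    have h1 := List.tail_reverse (l := (edges (b :: w)).reverse)
    rw [List.reverse_reverse] at h1
    rw [h1, List.reverse_reverse]
  rw [hdrop, edges_cons, List.tail_cons]
  have hinj : Function.Injective (fun x : ℤ => pos (b :: w) + 1 - x) := fun x y hxy => by
    dsimp at hxy; omega
  rw [count_map_sub, List.count_reverse,
    show pos (b :: w) + 1 - (pos (b :: w) + 1 - max 0 (stp b)) = max 0 (stp b) from by ring,
    count_map_add]

lemma ofFn_rev {n : ℕ} (v : Fin n → Bool) :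
    List.ofFn (fun i => v i.rev) = (List.ofFn v).reverse := by
  apply List.ext_getElem (by simp)
  intro i h1 h2
  rw [List.getElem_ofFn, List.getElem_reverse, List.getElem_ofFn]
  congr 1
  apply Fin.ext
  simp only [Fin.val_rev]
  simp only [List.length_ofFn] at h2 ⊢
  omega

lemma count_pred (m u : ℕ) :
    (∑ v : Fin (m+1) → Bool,
        if 1 ≤ lastEdge (List.ofFn v) ∧ prevCount (List.ofFn v) = u then 1 else 0)
      = cnt m u 0 := by
  have hinv : Function.Involutive (fun v : Fin (m+1) → Bool => fun i => v i.rev) := by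
    intro v; funext i; simp
  have step1 : (∑ v : Fin (m+1) → Bool,
        if 1 ≤ lastEdge (List.ofFn v) ∧ prevCount (List.ofFn v) = u then 1 else 0)
      = ∑ v : Fin (m+1) → Bool,
        if 1 ≤ lastEdge ((List.ofFn v).reverse) ∧ prevCount ((List.ofFn v).reverse) = u
        then 1 else 0 := by
    refine Fintype.sum_bijective _ hinv.bijective _ _ fun v => ?_
    rw [show List.ofFn (fun i => v i.rev) = (List.ofFn v).reverse from ofFn_rev v,
      List.reverse_reverse]
  rw [step1]
  rw [← Equiv.sum_comp (Fin.consEquiv (fun _ : Fin (m+1) => Bool))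
    (fun v => if 1 ≤ lastEdge ((List.ofFn v).reverse) ∧ prevCount ((List.ofFn v).reverse) = u
      then 1 else 0)]
  rw [Fintype.sum_prod_type, Fintype.sum_bool]
  have key : ∀ (b : Bool) (w : Fin m → Bool),
      (Fin.consEquiv (fun _ : Fin (m+1) => Bool)) (b, w) = Fin.cons b w := fun _ _ => rfl
  simp only [key, ofFn_cons, lastEdge_rev, prevCount_rev]
  have htrue : ∀ w : Fin m → Bool,
      (if 1 ≤ pos (true :: List.ofFn w) + 1 - max 0 (stp true) ∧
          (edges (List.ofFn w)).count (max 0 (stp true) - stp true) = u then 1 else 0)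
      = (if 0 ≤ pos (List.ofFn w) ∧ (edges (List.ofFn w)).count 0 = u then (1:ℕ) else 0) := by
    intro w
    have e3 : max 0 (stp true) - stp true = (0:ℤ) := by simp [stp]
    have e4 : pos (true :: List.ofFn w) + 1 - max 0 (stp true) = pos (List.ofFn w) + 1 := by
      rw [pos_cons]; simp [stp]; ring
    rw [e3, e4]
    exact if_congr (and_congr (by omega) Iff.rfl) rfl rfl
  have hfalse : ∀ w : Fin m → Bool,
      (if 1 ≤ pos (false :: List.ofFn w) + 1 - max 0 (stp false) ∧
          (edges (List.ofFn w)).count (max 0 (stp false) - stp false) = u then 1 else 0)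
      = (if 1 ≤ pos (List.ofFn w) ∧ (edges (List.ofFn w)).count 1 = u then (1:ℕ) else 0) := by
    intro w
    have e3 : max 0 (stp false) - stp false = (1:ℤ) := by simp [stp]
    have e4 : pos (false :: List.ofFn w) + 1 - max 0 (stp false) = pos (List.ofFn w) := by
      rw [pos_cons]; simp [stp]
    rw [e3, e4]
  rw [Finset.sum_congr rfl (fun w _ => htrue w), Finset.sum_congr rfl (fun w _ => hfalse w)]
  have hneg : (∑ w : Fin m → Bool,
      if 1 ≤ pos (List.ofFn w) ∧ (edges (List.ofFn w)).count 1 = u then (1:ℕ) else 0)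
    = ∑ w : Fin m → Bool,
      if pos (List.ofFn w) ≤ -1 ∧ (edges (List.ofFn w)).count 0 = u then (1:ℕ) else 0 := by
    have hinv2 : Function.Involutive (fun v : Fin m → Bool => fun i => !(v i)) := by
      intro v; funext i; simp
    refine Fintype.sum_bijective _ hinv2.bijective _ _ fun w => ?_
    have h1 : List.ofFn (fun i => !(w i)) = (List.ofFn w).map not := by
      rw [List.map_ofFn]; rfl
    rw [h1, edges_map_not, count_map_onesub, pos_map_not]
    exact if_congr (and_congr (by omega) (by norm_num)) rfl rfl
  rw [hneg, ← Finset.sum_add_distrib]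
  unfold cnt
  apply Finset.sum_congr rfl
  intro w _
  rcases le_or_gt 0 (pos (List.ofFn w)) with hp | hp
  · have h2 : ¬(pos (List.ofFn w) ≤ -1 ∧ (edges (List.ofFn w)).count 0 = u) :=
      fun hc => absurd hc.1 (by omega)
    rw [if_neg h2, add_zero]
    exact if_congr (and_iff_right hp) rfl rfl
  · have h2 : ¬(0 ≤ pos (List.ofFn w) ∧ (edges (List.ofFn w)).count 0 = u) :=
      fun hc => absurd hc.1 (by omega)
    rw [if_neg h2, zero_add]
    exact if_congr (and_iff_right (by omega : pos (List.ofFn w) ≤ -1)) rfl rfl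

lemma count_pred_formula (n u : ℕ) (hn : 1 ≤ n) :
    (∑ v : Fin n → Bool,
        if 1 ≤ lastEdge (List.ofFn v) ∧ prevCount (List.ofFn v) = u then 1 else 0)
      = (n - 1).choose ((n + u) / 2) := by
  obtain ⟨m, rfl⟩ : ∃ m, n = m + 1 := ⟨n - 1, by omega⟩
  rw [count_pred, cnt_formula]
  congr 1
  omega



lemma edges_getD (l : List Bool) (i : ℕ) (h : i < l.length) :
    (edges l).getD i 0 = max (pos (l.take i)) (pos (l.take (i + 1))) := by
  have hlt : i < (edges l).length := by simpa using h
  rw [List.getD_eq_getElem?_getD, List.getElem?_eq_getElem hlt, Option.getD_some,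
    edges_getElem l i h]

lemma lastEdge_le (l : List Bool) (hl : l ≠ []) : lastEdge l ≤ (l.length : ℤ) := by
  unfold lastEdge
  have hlt : l.length - 1 < (edges l).length := by
    have : 0 < l.length := List.length_pos_iff.2 hl
    simp only [length_edges]
    omega
  rw [List.getD_eq_getElem?_getD, List.getElem?_eq_getElem hlt, Option.getD_some]
  exact edges_le l _ (List.getElem_mem hlt)

lemma stp_injective : Function.Injective stp := by decide

lemma int_half_max (a b : ℤ) (hab : b = a + 1 ∨ b = a - 1) :
    (1 + a + b) / 2 = max a b := by
  rcases hab with rfl | rfl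
  · rw [max_eq_right (by omega : a ≤ a + 1)]
    omega
  · rw [max_eq_left (by omega : a - 1 ≤ a)]
    omega

lemma count_take_eq_sum (E : List ℤ) (r : ℤ) :
    ∀ j, j ≤ E.length →
      (E.take j).count r = ∑ k ∈ Finset.Icc 1 j, if E.getD (k - 1) 0 = r then 1 else 0 := by
  intro j
  induction j with
  | zero => intro _; simp
  | succ j ih =>
      intro hj
      rw [Finset.sum_Icc_succ_top (by omega : 1 ≤ j + 1), ← ih (by omega), List.take_succ]
      rw [List.count_append]
      congr 1
      have hjlt : j < E.length := by omega
      rw [List.getElem?_eq_getElem hjlt]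
      rw [show j + 1 - 1 = j from rfl, List.getD_eq_getElem?_getD,
        List.getElem?_eq_getElem hjlt, Option.getD_some]
      simp only [Option.toList_some, List.count_cons, List.count_nil, beq_iff_eq, zero_add]

end SW

/-- For the simple symmetric random walk, the probability that the walk crossed its
current edge exactly `u` times before step `n`:
`Σ_{r=1}^∞ P[U_{n-1,r} = u, R_n = r] = 2^(-n)·C(n-1, ⌊(n+u)/2⌋) ≤ 1/√n`. -/
theorem stmt7
    {Ω : Type*} [MeasurableSpace Ω] (P : Measure Ω) [IsProbabilityMeasure P]
    (V : ℕ → Ω → ℤ)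
    (hVmeas : ∀ n, Measurable (V n))
    (hVval : ∀ n ω, V n ω = 1 ∨ V n ω = -1)
    (hVfair : ∀ n, P {ω | V n ω = 1} = 1 / 2)
    (hVindep : iIndepFun V P)
    (S : ℕ → Ω → ℤ) (hS : ∀ n ω, S n ω = ∑ k ∈ Finset.Icc 1 n, V k ω)
    (R : ℕ → Ω → ℤ) (hR : ∀ n ω, R n ω = (1 + S (n - 1) ω + S n ω) / 2)
    (U : ℕ → ℤ → Ω → ℕ)
    (hU : ∀ n r ω, U n r ω = ∑ k ∈ Finset.Icc 1 n, if R k ω = r then 1 else 0) :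
    ∀ n : ℕ, 1 ≤ n → ∀ u : ℕ,
      (∑' r : ℕ, P {ω | U (n - 1) ((r : ℤ) + 1) ω = u ∧ R n ω = (r : ℤ) + 1}) =
        ((n - 1).choose ((n + u) / 2) : ENNReal) / 2 ^ n ∧
      ((n - 1).choose ((n + u) / 2) : ENNReal) / 2 ^ n ≤
        ENNReal.ofReal (1 / Real.sqrt n) := by
  intro n hn u
  classical
  refine ⟨?_, SW.choose_sqrt_bound n u hn⟩
  set Cyl : (Fin n → Bool) → Set Ω :=
    fun v => ⋂ k : Fin n, {ω | V ((k : ℕ) + 1) ω = SW.stp (v k)} with hCyl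
  have hmemCyl : ∀ (v : Fin n → Bool) (ω : Ω),
      ω ∈ Cyl v ↔ ∀ k : Fin n, V ((k : ℕ) + 1) ω = SW.stp (v k) := by
    intro v ω
    simp only [hCyl, Set.mem_iInter, Set.mem_setOf_eq]
  -- S bridge
  have hSbridge : ∀ (v : Fin n → Bool) (ω : Ω),
      (∀ k : Fin n, V ((k : ℕ) + 1) ω = SW.stp (v k)) →
      ∀ j, j ≤ n → S j ω = SW.pos ((List.ofFn v).take j) := by
    intro v ω hv j
    induction j with
    | zero =>
        intro _
        rw [hS]
        simp [SW.pos]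
    | succ j ihj =>
        intro hjn
        have hjlt : j < n := by omega
        have hstep : S (j + 1) ω = S j ω + V (j + 1) ω := by
          rw [hS, hS, Finset.sum_Icc_succ_top (by omega : 1 ≤ j + 1)]
        have htake : (List.ofFn v).take (j + 1)
            = (List.ofFn v).take j ++ [v ⟨j, hjlt⟩] := by
          rw [List.take_succ, List.getElem?_eq_getElem (by simpa using hjlt)]
          simp
        have hvj : V (j + 1) ω = SW.stp (v ⟨j, hjlt⟩) := hv ⟨j, hjlt⟩
        rw [hstep, ihj (by omega), htake, SW.pos_append, hvj]
        simp [SW.pos]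
  -- R bridge
  have hRbridge : ∀ (v : Fin n → Bool) (ω : Ω),
      (∀ k : Fin n, V ((k : ℕ) + 1) ω = SW.stp (v k)) →
      ∀ k, 1 ≤ k → k ≤ n → R k ω = (SW.edges (List.ofFn v)).getD (k - 1) 0 := by
    intro v ω hv k hk1 hkn
    have hdiff : S k ω = S (k - 1) ω + V k ω := by
      rw [hS, hS, show k = (k - 1) + 1 by omega,
        Finset.sum_Icc_succ_top (by omega : 1 ≤ (k - 1) + 1)]
      rw [show k - 1 + 1 = k by omega]
    have hlt : k - 1 < (List.ofFn v).length := by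
      rw [List.length_ofFn]
      omega
    have hgd : (SW.edges (List.ofFn v)).getD (k - 1) 0
        = max (SW.pos ((List.ofFn v).take (k - 1))) (SW.pos ((List.ofFn v).take k)) := by
      rw [SW.edges_getD (List.ofFn v) (k - 1) hlt, show k - 1 + 1 = k by omega]
    rw [hR, hgd, ← hSbridge v ω hv (k - 1) (by omega), ← hSbridge v ω hv k hkn,
      show k - 1 = k - 1 from rfl]
    apply SW.int_half_max
    rcases hVval k ω with h | h
    · left; rw [hdiff, h]
    · right; rw [hdiff, h]; ring
  -- U bridge
  have hUbridge : ∀ (v : Fin n → Bool) (ω : Ω),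
      (∀ k : Fin n, V ((k : ℕ) + 1) ω = SW.stp (v k)) →
      ∀ c : ℤ, U (n - 1) c ω = ((SW.edges (List.ofFn v)).take (n - 1)).count c := by
    intro v ω hv c
    rw [hU, SW.count_take_eq_sum _ c (n - 1) (by simp)]
    apply Finset.sum_congr rfl
    intro k hk
    rw [Finset.mem_Icc] at hk
    rw [hRbridge v ω hv k hk.1 (by omega)]
  -- event characterization
  have hiff : ∀ (r : ℕ) (v : Fin n → Bool) (ω : Ω),
      (∀ k : Fin n, V ((k : ℕ) + 1) ω = SW.stp (v k)) →
      ((U (n - 1) ((r : ℤ) + 1) ω = u ∧ R n ω = (r : ℤ) + 1) ↔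
        (SW.lastEdge (List.ofFn v) = (r : ℤ) + 1 ∧
          ((SW.edges (List.ofFn v)).dropLast).count ((r : ℤ) + 1) = u)) := by
    intro r v ω hv
    rw [hUbridge v ω hv, hRbridge v ω hv n hn le_rfl]
    have h1 : SW.lastEdge (List.ofFn v) = (SW.edges (List.ofFn v)).getD (n - 1) 0 := by
      unfold SW.lastEdge
      rw [List.length_ofFn]
    have h2 : (SW.edges (List.ofFn v)).dropLast = (SW.edges (List.ofFn v)).take (n - 1) := by
      rw [List.dropLast_eq_take]
      congr 1
      simp
    rw [h1, h2]
    tauto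
  set Q : ℕ → (Fin n → Bool) → Prop := fun r v =>
    SW.lastEdge (List.ofFn v) = (r : ℤ) + 1 ∧
      ((SW.edges (List.ofFn v)).dropLast).count ((r : ℤ) + 1) = u with hQ
  -- totality
  have htotal : ∀ ω : Ω,
      ∀ k : Fin n, V ((k : ℕ) + 1) ω
        = SW.stp ((fun k : Fin n => decide (V ((k : ℕ) + 1) ω = 1)) k) := by
    intro ω k
    rcases hVval ((k : ℕ) + 1) ω with h | h
    · have hd : decide (V ((k : ℕ) + 1) ω = 1) = true := decide_eq_true h
      simp only [hd, h]
      rfl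
    · have hd : decide (V ((k : ℕ) + 1) ω = 1) = false :=
        decide_eq_false (by rw [h]; norm_num)
      simp only [hd, h]
      rfl
  -- event is a finite union of cylinders
  have hevent : ∀ r : ℕ,
      {ω | U (n - 1) ((r : ℤ) + 1) ω = u ∧ R n ω = (r : ℤ) + 1}
        = ⋃ v ∈ Finset.univ.filter (fun v => Q r v), Cyl v := by
    intro r
    ext ω
    simp only [Set.mem_setOf_eq, Set.mem_iUnion, Finset.mem_filter, Finset.mem_univ,
      true_and, exists_prop]
    constructor
    · intro hω
      refine ⟨fun k => decide (V ((k : ℕ) + 1) ω = 1), ?_, ?_⟩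
      · exact (hiff r _ ω (htotal ω)).1 hω
      · rw [hmemCyl]
        exact htotal ω
    · rintro ⟨v, hQv, hωv⟩
      exact (hiff r v ω ((hmemCyl v ω).1 hωv)).2 hQv
  -- measure of a cylinder
  have hmeasCyl : ∀ v : Fin n → Bool, MeasurableSet (Cyl v) := by
    intro v
    apply MeasurableSet.iInter
    intro k
    exact hVmeas _ (measurableSet_singleton _)
  have meas_cyl : ∀ v : Fin n → Bool, P (Cyl v) = (1 / 2 : ENNReal) ^ n := by
    intro v
    set tgt : ℕ → ℤ := fun i => if h : i - 1 < n then SW.stp (v ⟨i - 1, h⟩) else 1 with htgt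
    have hset : Cyl v = ⋂ i ∈ Finset.Icc 1 n, V i ⁻¹' {tgt i} := by
      ext ω
      simp only [hCyl, Set.mem_iInter, Set.mem_setOf_eq, Set.mem_preimage,
        Set.mem_singleton_iff, Finset.mem_Icc]
      constructor
      · intro h i hi
        have hlt : i - 1 < n := by omega
        have h2 := h ⟨i - 1, hlt⟩
        simp only [htgt]
        rw [dif_pos hlt]
        rw [show (⟨i - 1, hlt⟩ : Fin n).val + 1 = i by simp; omega] at h2
        exact h2
      · intro h k
        have hk1 : 1 ≤ (k : ℕ) + 1 := by omega
        have hk2 : (k : ℕ) + 1 ≤ n := by omega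
        have hk := h ((k : ℕ) + 1) ⟨hk1, hk2⟩
        have e : tgt ((k : ℕ) + 1) = SW.stp (v k) := by
          simp only [htgt]
          rw [dif_pos (show (k : ℕ) + 1 - 1 < n by omega)]
          exact congrArg (fun j => SW.stp (v j)) (Fin.ext rfl)
        rw [e] at hk
        exact hk
    rw [hset, hVindep.meas_biInter (fun i _ => ⟨{tgt i}, measurableSet_singleton _, rfl⟩)]
    have hhalf : ∀ i ∈ Finset.Icc 1 n, P (V i ⁻¹' {tgt i}) = 1 / 2 := by
      intro i _
      have hval : tgt i = 1 ∨ tgt i = -1 := by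
        simp only [htgt]
        by_cases h : i - 1 < n
        · rw [dif_pos h]
          cases v ⟨i - 1, h⟩ <;> simp [SW.stp]
        · rw [dif_neg h]
          left
          rfl
      rcases hval with h | h
      · rw [h]
        exact hVfair i
      · rw [h]
        have hcompl : V i ⁻¹' {-1} = {ω | V i ω = 1}ᶜ := by
          ext ω
          simp only [Set.mem_preimage, Set.mem_singleton_iff, Set.mem_compl_iff,
            Set.mem_setOf_eq]
          rcases hVval i ω with hh | hh <;> rw [hh] <;> norm_num
        have hm1 : MeasurableSet {ω | V i ω = 1} := hVmeas i (measurableSet_singleton 1)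
        rw [hcompl, measure_compl hm1 (measure_ne_top P _), measure_univ, hVfair i]
        rw [one_div, ENNReal.one_sub_inv_two]
    rw [Finset.prod_congr rfl hhalf, Finset.prod_const, Nat.card_Icc]
    norm_num
  -- disjointness
  have hdisj : ∀ r : ℕ, Set.PairwiseDisjoint
      ↑(Finset.univ.filter (fun v => Q r v)) Cyl := by
    intro r v _ v' _ hne
    refine Set.disjoint_left.2 fun ω h1 h2 => hne ?_
    funext k
    apply SW.stp_injective
    rw [← (hmemCyl v ω).1 h1 k, ← (hmemCyl v' ω).1 h2 k]
  -- measure of the event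
  have hPA : ∀ r : ℕ,
      P {ω | U (n - 1) ((r : ℤ) + 1) ω = u ∧ R n ω = (r : ℤ) + 1}
        = ((Finset.univ.filter (fun v => Q r v)).card : ENNReal) * (1 / 2) ^ n := by
    intro r
    rw [hevent r, measure_biUnion_finset (hdisj r) (fun v _ => hmeasCyl v)]
    rw [Finset.sum_congr rfl (fun v _ => meas_cyl v), Finset.sum_const, nsmul_eq_mul]
  -- bound on r
  have hQbound : ∀ (r : ℕ) (v : Fin n → Bool), Q r v → r < n := by
    intro r v hq
    have hne : List.ofFn v ≠ [] := by
      rw [ne_eq, List.ofFn_eq_nil_iff]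
      omega
    have h1 := SW.lastEdge_le (List.ofFn v) hne
    rw [hq.1, List.length_ofFn] at h1
    omega
  -- compute the tsum
  rw [tsum_eq_sum (s := Finset.range n) (fun r hr => by
    rw [hPA r]
    have hemp : Finset.univ.filter (fun v => Q r v) = ∅ :=
      Finset.filter_eq_empty_iff.2 (fun v _ => fun hq =>
        absurd (hQbound r v hq) (by simpa using hr))
    rw [hemp]
    simp)]
  rw [Finset.sum_congr rfl (fun r _ => hPA r), ← Finset.sum_mul]
  -- the counting identity
  have hpoint : ∀ v : Fin n → Bool,
      (∑ r ∈ Finset.range n, if Q r v then 1 else 0)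
        = if 1 ≤ SW.lastEdge (List.ofFn v) ∧ SW.prevCount (List.ofFn v) = u
          then (1 : ℕ) else 0 := by
    intro v
    have hne : List.ofFn v ≠ [] := by
      rw [ne_eq, List.ofFn_eq_nil_iff]
      omega
    have hbound : SW.lastEdge (List.ofFn v) ≤ (n : ℤ) := by
      have := SW.lastEdge_le (List.ofFn v) hne
      rwa [List.length_ofFn] at this
    by_cases hp : 1 ≤ SW.lastEdge (List.ofFn v) ∧ SW.prevCount (List.ofFn v) = u
    · rw [if_pos hp]
      obtain ⟨hp1, hp2⟩ := hp
      have hr0 : ((SW.lastEdge (List.ofFn v) - 1).toNat : ℤ)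
          = SW.lastEdge (List.ofFn v) - 1 := Int.toNat_of_nonneg (by omega)
      rw [Finset.sum_eq_single_of_mem ((SW.lastEdge (List.ofFn v) - 1).toNat)
        (Finset.mem_range.2 (by omega)) (fun r _ hne2 => by
          rw [if_neg]
          rintro ⟨hc1, -⟩
          apply hne2
          omega)]
      rw [if_pos]
      have he : ((SW.lastEdge (List.ofFn v) - 1).toNat : ℤ) + 1
          = SW.lastEdge (List.ofFn v) := by omega
      refine ⟨by omega, ?_⟩
      rw [he]
      unfold SW.prevCount at hp2
      exact hp2
    · rw [if_neg hp]
      apply Finset.sum_eq_zero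
      intro r _
      rw [if_neg]
      rintro ⟨hc1, hc2⟩
      apply hp
      refine ⟨by rw [hc1]; omega, ?_⟩
      unfold SW.prevCount
      rw [hc1]
      exact hc2
  have hcards : (∑ r ∈ Finset.range n, ((Finset.univ.filter (fun v => Q r v)).card : ENNReal))
      = ((n - 1).choose ((n + u) / 2) : ENNReal) := by
    rw [← Nat.cast_sum]
    congr 1
    have h1 : ∀ r, (Finset.univ.filter (fun v => Q r v)).card
        = ∑ v : Fin n → Bool, if Q r v then 1 else 0 := fun r => Finset.card_filter _ _
    rw [Finset.sum_congr rfl (fun r _ => h1 r), Finset.sum_comm]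
    rw [Finset.sum_congr rfl (fun v _ => hpoint v)]
    exact SW.count_pred_formula n u hn
  rw [hcards]
  have h2n : ((1 : ENNReal) / 2) ^ n = (2 ^ n)⁻¹ := by
    rw [one_div, ENNReal.inv_pow]
  rw [h2n, div_eq_mul_inv]
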